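/- Let θ ∈ [0, π/2] and r ≥ 0, and set t = r·e^{−iθ}. Then (2/3)·sin^{3/2}(θ) ≤ |ξ(t)|, and moreover if |t − 1| ≤ 1, then (2/3)·|t − 1|^{3/2} ≤ |ξ(t)| ≤ 2·|t − 1|^{3/2}. -/

import Mathlib

open Complex Real

/-- The branch `R(t) = √(t-1)·√(t+1)` with principal complex square roots. -/
noncomputable def Rb (t : ℂ) : ℂ := (t - 1) ^ ((1 : ℂ)/2) * (t + 1) ^ ((1 : ℂ)/2)

/-- `ξ(t) = (1/2)(t·R(t) − Log(t + R(t)))` with the principal logarithm. -/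
noncomputable def xi (t : ℂ) : ℂ := (1/2 : ℂ) * (t * Rb t - Complex.log (t + Rb t))

open Filter

lemma half_mul_half {z : ℂ} (hz : z ≠ 0) : z ^ ((1:ℂ)/2) * z ^ ((1:ℂ)/2) = z := by
  rw [← Complex.cpow_add _ _ hz]; norm_num

lemma re_half_nonneg (z : ℂ) : 0 ≤ (z ^ ((1:ℂ)/2)).re := by
  rcases eq_or_ne z 0 with rfl | hz
  · rw [Complex.zero_cpow (by norm_num)]; simp
  · rw [Complex.cpow_def_of_ne_zero hz, Complex.exp_re]
    apply mul_nonneg (Real.exp_nonneg _)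
    apply Real.cos_nonneg_of_mem_Icc
    have h1 := Complex.neg_pi_lt_arg z
    have h2 := Complex.arg_le_pi z
    have h3 : (Complex.log z * ((1:ℂ)/2)).im = z.arg / 2 := by
      simp [Complex.mul_im, Complex.log_im]
      ring
    rw [h3]
    constructor <;> [linarith; linarith]

lemma one_le_re_half {z : ℂ} (h : 1 ≤ z.re) : 1 ≤ (z ^ ((1:ℂ)/2)).re := by
  have hz : z ≠ 0 := by
    intro h0; rw [h0] at h; simp at h; linarith
  have h2 := half_mul_half hz
  have hre := re_half_nonneg z
  set w := z ^ ((1:ℂ)/2) with hw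
  have hre2 : w.re * w.re - w.im * w.im = z.re := by
    rw [← Complex.mul_re, h2]
  nlinarith

lemma abs_half (z : ℂ) : ‖z ^ ((1:ℂ)/2)‖ = Real.sqrt (‖z‖) := by
  have h : ((1:ℂ)/2) = (((1:ℝ)/2 : ℝ) : ℂ) := by norm_num
  rw [h, Complex.norm_cpow_real, Real.sqrt_eq_rpow]

lemma im_mul_half_nonpos {a b : ℂ} (ha0 : a ≠ 0) (hb0 : b ≠ 0)
    (ha : a.arg ≤ 0) (hb : b.arg ≤ 0) : (a ^ ((1:ℂ)/2) * b ^ ((1:ℂ)/2)).im ≤ 0 := by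
  rw [Complex.cpow_def_of_ne_zero ha0, Complex.cpow_def_of_ne_zero hb0, ← Complex.exp_add,
    Complex.exp_im]
  have him : (Complex.log a * ((1:ℂ)/2) + Complex.log b * ((1:ℂ)/2)).im
      = a.arg / 2 + b.arg / 2 := by
    simp [Complex.add_im, Complex.mul_im, Complex.log_im]; ring
  rw [him]
  have h1 := Complex.neg_pi_lt_arg a
  have h2 := Complex.neg_pi_lt_arg b
  have hs : Real.sin (a.arg / 2 + b.arg / 2) ≤ 0 := by
    apply Real.sin_nonpos_of_nonpos_of_neg_pi_le <;> linarith
  exact mul_nonpos_iff.mpr (Or.inl ⟨Real.exp_nonneg _, hs⟩)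

lemma re_mul_half_nonneg {a b : ℂ} (ha0 : a ≠ 0) (hb0 : b ≠ 0)
    (ha : a.arg = 0) (hb : b.arg = 0) : 0 ≤ (a ^ ((1:ℂ)/2) * b ^ ((1:ℂ)/2)).re := by
  rw [Complex.cpow_def_of_ne_zero ha0, Complex.cpow_def_of_ne_zero hb0, ← Complex.exp_add,
    Complex.exp_re]
  have him : (Complex.log a * ((1:ℂ)/2) + Complex.log b * ((1:ℂ)/2)).im
      = a.arg / 2 + b.arg / 2 := by
    simp [Complex.add_im, Complex.mul_im, Complex.log_im]; ring
  rw [him, ha, hb]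
  simp [Real.exp_nonneg]

lemma half_sub_mul_half {z : ℂ} (hz : z ≠ 0) : z ^ ((1:ℂ)/2 - 1) * z ^ ((1:ℂ)/2) = 1 := by
  rw [← Complex.cpow_add _ _ hz]; norm_num

lemma Rb_sq {s : ℂ} (h1 : s - 1 ≠ 0) (h2 : s + 1 ≠ 0) : Rb s * Rb s = s * s - 1 := by
  unfold Rb
  have e1 := half_mul_half h1
  have e2 := half_mul_half h2
  linear_combination ((s+1)^((1:ℂ)/2) * (s+1)^((1:ℂ)/2)) * e1 + (s-1) * e2

lemma Rb_ne_zero {s : ℂ} (h1 : s - 1 ≠ 0) (h2 : s + 1 ≠ 0) : Rb s ≠ 0 := by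
  unfold Rb
  exact mul_ne_zero (by simp [Complex.cpow_eq_zero_iff, h1]) (by simp [Complex.cpow_eq_zero_iff, h2])

lemma add_Rb_ne_zero {s : ℂ} (h1 : s - 1 ≠ 0) (h2 : s + 1 ≠ 0) : s + Rb s ≠ 0 := by
  intro h
  have hR : Rb s = -s := by linear_combination h
  have h2' := Rb_sq h1 h2
  rw [hR] at h2'
  have : (1:ℂ) = 0 := by linear_combination h2'
  simp at this

lemma xi_hasDerivAt {s : ℂ} (h1 : s - 1 ∈ Complex.slitPlane) (h2 : s + 1 ∈ Complex.slitPlane)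
    (h3 : s + Rb s ∈ Complex.slitPlane) : HasDerivAt xi (Rb s) s := by
  have h10 : s - 1 ≠ 0 := Complex.slitPlane_ne_zero h1
  have h20 : s + 1 ≠ 0 := Complex.slitPlane_ne_zero h2
  have hW0 : Rb s ≠ 0 := Rb_ne_zero h10 h20
  have hsW : s + Rb s ≠ 0 := add_Rb_ne_zero h10 h20
  have hW2 : Rb s * Rb s = s * s - 1 := Rb_sq h10 h20
  have d1 : HasDerivAt (fun z : ℂ => (z - 1) ^ ((1:ℂ)/2))
      ((1:ℂ)/2 * (s-1) ^ ((1:ℂ)/2 - 1) * 1) s :=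
    ((hasDerivAt_id s).sub_const 1).cpow_const h1
  have d2 : HasDerivAt (fun z : ℂ => (z + 1) ^ ((1:ℂ)/2))
      ((1:ℂ)/2 * (s+1) ^ ((1:ℂ)/2 - 1) * 1) s :=
    ((hasDerivAt_id s).add_const 1).cpow_const h2
  have dR : HasDerivAt Rb
      (((1:ℂ)/2 * (s-1) ^ ((1:ℂ)/2 - 1) * 1) * (s+1) ^ ((1:ℂ)/2)
        + (s-1) ^ ((1:ℂ)/2) * ((1:ℂ)/2 * (s+1) ^ ((1:ℂ)/2 - 1) * 1)) s := by
    exact d1.mul d2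
  set dRv := ((1:ℂ)/2 * (s-1) ^ ((1:ℂ)/2 - 1) * 1) * (s+1) ^ ((1:ℂ)/2)
        + (s-1) ^ ((1:ℂ)/2) * ((1:ℂ)/2 * (s+1) ^ ((1:ℂ)/2 - 1) * 1) with hdRv
  have hkey : dRv * Rb s = s := by
    have e1 := half_sub_mul_half h10
    have e2 := half_sub_mul_half h20
    have f1 := half_mul_half h10
    have f2 := half_mul_half h20
    rw [hdRv]
    unfold Rb
    linear_combination ((1:ℂ)/2 * ((s+1)^((1:ℂ)/2) * (s+1)^((1:ℂ)/2))) * e1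
      + ((1:ℂ)/2 * ((s-1)^((1:ℂ)/2) * (s-1)^((1:ℂ)/2))) * e2
      + ((1:ℂ)/2) * f2 + ((1:ℂ)/2) * f1
  have d3 : HasDerivAt (fun z : ℂ => z * Rb z) (1 * Rb s + s * dRv) s :=
    (hasDerivAt_id s).mul dR
  have d4 : HasDerivAt (fun z : ℂ => Complex.log (z + Rb z)) ((1 + dRv) / (s + Rb s)) s :=
    HasDerivAt.clog ((hasDerivAt_id s).add dR) h3
  have d5 : HasDerivAt (fun z : ℂ => (1/2 : ℂ) * (z * Rb z - Complex.log (z + Rb z)))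
      ((1/2 : ℂ) * ((1 * Rb s + s * dRv) - (1 + dRv) / (s + Rb s))) s :=
    (d3.sub d4).const_mul _
  have heq : (1/2 : ℂ) * ((1 * Rb s + s * dRv) - (1 + dRv) / (s + Rb s)) = Rb s := by
    have hdiv : (1 + dRv) / (s + Rb s) = 1 / Rb s := by
      rw [div_eq_div_iff hsW hW0]
      linear_combination hkey
    rw [hdiv]
    field_simp
    linear_combination s * hkey - hW2
  rw [heq] at d5
  exact d5

lemma sqrt_mul_cpow {u : ℝ} (hu : 0 ≤ u) {z : ℂ} (hz : z ≠ 0) :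
    ((u:ℂ)*z) ^ ((1:ℂ)/2) = (Real.sqrt u : ℂ) * z ^ ((1:ℂ)/2) := by
  rcases eq_or_lt_of_le hu with h | hu'
  · simp [← h, Complex.zero_cpow (show ((1:ℂ)/2) ≠ 0 by norm_num)]
  · have hmul : (u:ℂ) * z ≠ 0 := mul_ne_zero (Complex.ofReal_ne_zero.mpr hu'.ne') hz
    rw [Complex.cpow_def_of_ne_zero hmul, Complex.cpow_def_of_ne_zero hz,
      Complex.log_ofReal_mul hu' hz, add_mul, Complex.exp_add]
    congr 1
    have : (Real.log u : ℂ) * ((1:ℂ)/2) = ((Real.log u / 2 : ℝ) : ℂ) := by push_cast; ring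
    rw [this, ← Complex.ofReal_exp, ← Real.log_sqrt hu, Real.exp_log (Real.sqrt_pos.mpr hu')]

lemma Rb_seg {z : ℂ} (hz : z ≠ 0) {u : ℝ} (hu : 0 ≤ u) :
    Rb (1 + u*z) = (Real.sqrt u : ℂ) * z ^ ((1:ℂ)/2) * (2 + u*z) ^ ((1:ℂ)/2) := by
  unfold Rb
  have e1 : (1 + (u:ℂ)*z) - 1 = (u:ℂ)*z := by ring
  have e2 : (1 + (u:ℂ)*z) + 1 = 2 + (u:ℂ)*z := by ring
  rw [e1, e2, sqrt_mul_cpow hu hz]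

lemma Rb_one : Rb 1 = 0 := by
  unfold Rb
  simp [Complex.zero_cpow (show ((1:ℂ)/2) ≠ 0 by norm_num)]

lemma xi_one : xi 1 = 0 := by
  simp [xi, Rb_one, Complex.log_one]

lemma xi_eq (t : ℂ) (hre : 0 ≤ t.re) (him : t.im ≤ 0) (hsp : t - 1 ∈ Complex.slitPlane) :
    xi t = (t - 1) * (t-1) ^ ((1:ℂ)/2)
      * ∫ u in (0:ℝ)..1, (Real.sqrt u : ℂ) * (2 + u*(t-1)) ^ ((1:ℂ)/2) := by
  set z := t - 1 with hzdef
  have hz0 : z ≠ 0 := Complex.slitPlane_ne_zero hsp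
  have hzre : -1 ≤ z.re := by
    have : z.re = t.re - 1 := by simp [hzdef]
    rw [this]; linarith
  -- membership facts for u ∈ (0, 1]
  have h1 : ∀ u : ℝ, 0 < u → ((1 + (u:ℂ)*z) - 1) ∈ Complex.slitPlane := by
    intro u hu
    have e1 : (1 + (u:ℂ)*z) - 1 = (u:ℂ)*z := by ring
    rw [e1, Complex.mem_slitPlane_iff]
    rcases Complex.mem_slitPlane_iff.mp hsp with h | h
    · left; simp [Complex.mul_re]; positivity
    · right; simp only [Complex.mul_im, Complex.ofReal_re, Complex.ofReal_im, zero_mul, add_zero]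
      exact mul_ne_zero (ne_of_gt hu) h
  have h2re : ∀ u : ℝ, 0 < u → u ≤ 1 → (1:ℝ) ≤ ((1 + (u:ℂ)*z) + 1).re := by
    intro u hu hu1
    have e2 : (1 + (u:ℂ)*z) + 1 = 2 + (u:ℂ)*z := by ring
    rw [e2]
    simp only [Complex.add_re, Complex.mul_re, Complex.ofReal_re, Complex.ofReal_im, zero_mul,
      sub_zero]
    have : u * z.re ≥ u * (-1) := by
      apply mul_le_mul_of_nonneg_left hzre hu.le
    have h2 : (2:ℂ).re = 2 := by norm_num
    nlinarith
  have h2 : ∀ u : ℝ, 0 < u → u ≤ 1 → ((1 + (u:ℂ)*z) + 1) ∈ Complex.slitPlane := by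
    intro u hu hu1
    exact Complex.mem_slitPlane_iff.mpr (Or.inl (by linarith [h2re u hu hu1]))
  have h3 : ∀ u : ℝ, 0 < u → u ≤ 1 →
      ((1 + (u:ℂ)*z) + Rb (1 + (u:ℂ)*z)) ∈ Complex.slitPlane := by
    intro u hu hu1
    have e1 : (1 + (u:ℂ)*z) - 1 = (u:ℂ)*z := by ring
    have e2 : (1 + (u:ℂ)*z) + 1 = 2 + (u:ℂ)*z := by ring
    have ha0 : (u:ℂ)*z ≠ 0 := Complex.slitPlane_ne_zero (e1 ▸ h1 u hu)
    have hb0 : (2:ℂ) + (u:ℂ)*z ≠ 0 := by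
      intro h; have := h2re u hu hu1; rw [e2, h] at this; norm_num at this
    have hRb : Rb (1 + (u:ℂ)*z) = ((u:ℂ)*z) ^ ((1:ℂ)/2) * (2 + (u:ℂ)*z) ^ ((1:ℂ)/2) := by
      unfold Rb; rw [e1, e2]
    have himuz : ((u:ℂ)*z).im = u * z.im := by
      simp [Complex.mul_im]
    rcases lt_or_eq_of_le him with him' | him'
    · -- t.im < 0
      have hzim : z.im < 0 := by simp [hzdef]; exact him'
      have haarg : ((u:ℂ)*z).arg ≤ 0 := by
        apply le_of_lt
        rw [Complex.arg_neg_iff]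
        rw [himuz]; exact mul_neg_of_pos_of_neg hu hzim
      have hbarg : ((2:ℂ) + (u:ℂ)*z).arg ≤ 0 := by
        apply le_of_lt
        rw [Complex.arg_neg_iff]
        simp only [Complex.add_im, Complex.mul_im, Complex.ofReal_re, Complex.ofReal_im,
          zero_mul, add_zero]
        have : (2:ℂ).im = 0 := by norm_num
        rw [this, zero_add]
        exact mul_neg_of_pos_of_neg hu hzim
      have himR : (Rb (1 + (u:ℂ)*z)).im ≤ 0 := by
        rw [hRb]; exact im_mul_half_nonpos ha0 hb0 haarg hbarg
      apply Complex.mem_slitPlane_iff.mpr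
      right
      simp only [Complex.add_im, Complex.one_re, Complex.one_im, zero_add]
      rw [himuz]
      have : u * z.im < 0 := mul_neg_of_pos_of_neg hu hzim
      linarith
    · -- t.im = 0, so z.im = 0 and z.re > 0
      have hzim : z.im = 0 := by simp [hzdef, ← him']
      have hzre' : 0 < z.re := by
        rcases Complex.mem_slitPlane_iff.mp hsp with h | h
        · exact h
        · exact absurd hzim h
      have haarg : ((u:ℂ)*z).arg = 0 := by
        apply Complex.arg_eq_zero_iff.mpr
        constructor
        · simp [Complex.mul_re, hzim]; positivity
        · rw [himuz, hzim, mul_zero]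
      have hbarg : ((2:ℂ) + (u:ℂ)*z).arg = 0 := by
        apply Complex.arg_eq_zero_iff.mpr
        constructor
        · have := h2re u hu hu1; rw [e2] at this; linarith
        · simp [Complex.add_im, himuz, hzim]
      have hreR : 0 ≤ (Rb (1 + (u:ℂ)*z)).re := by
        rw [hRb]; exact re_mul_half_nonneg ha0 hb0 haarg hbarg
      apply Complex.mem_slitPlane_iff.mpr
      left
      simp only [Complex.add_re, Complex.one_re, Complex.mul_re, Complex.ofReal_re,
        Complex.ofReal_im, zero_mul, sub_zero]
      have : 0 ≤ u * z.re := by positivity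
      linarith
  have h3' : ∀ u : ℝ, 0 ≤ u → u ≤ 1 →
      ((1 + (u:ℂ)*z) + Rb (1 + (u:ℂ)*z)) ∈ Complex.slitPlane := by
    intro u hu hu1
    rcases eq_or_lt_of_le hu with h | h
    · rw [← h]
      push_cast
      rw [zero_mul, add_zero, Rb_one, add_zero]
      exact Complex.one_mem_slitPlane
    · exact h3 u h hu1
  have h2re' : ∀ u : ℝ, 0 ≤ u → u ≤ 1 → ((2:ℂ) + (u:ℂ)*z) ∈ Complex.slitPlane := by
    intro u hu hu1
    rcases eq_or_lt_of_le hu with h | h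
    · rw [← h]; push_cast; rw [zero_mul, add_zero]
      exact Complex.mem_slitPlane_iff.mpr (Or.inl (by norm_num))
    · have := h2re u h hu1
      have e2 : (1 + (u:ℂ)*z) + 1 = 2 + (u:ℂ)*z := by ring
      rw [e2] at this
      exact Complex.mem_slitPlane_iff.mpr (Or.inl (by linarith))
  set g : ℝ → ℂ := fun u => (Real.sqrt u : ℂ) * (2 + (u:ℂ)*z) ^ ((1:ℂ)/2) with hgdef
  set F : ℝ → ℂ := fun u => xi (1 + (u:ℂ)*z) with hFdef
  have hFd : ∀ u ∈ Set.Ioo (0:ℝ) 1, HasDerivWithinAt F (z * z ^ ((1:ℂ)/2) * g u) (Set.Ioi u) u := by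
    intro u hu
    have hu0 : (0:ℝ) < u := hu.1
    have hu1 : u ≤ 1 := hu.2.le
    have hxi : HasDerivAt xi (Rb (1 + (u:ℂ)*z)) (1 + (u:ℂ)*z) :=
      xi_hasDerivAt (h1 u hu0) (h2 u hu0 hu1) (h3 u hu0 hu1)
    have hline : HasDerivAt (fun w : ℂ => 1 + w * z) z (u:ℂ) := by
      simpa using ((hasDerivAt_id ((u:ℝ):ℂ)).mul_const z).const_add 1
    have hcomp : HasDerivAt (fun w : ℂ => xi (1 + w * z)) (Rb (1 + (u:ℂ)*z) * z) (u:ℂ) := by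
      have := HasDerivAt.comp ((u:ℝ):ℂ) hxi hline
      exact this
    have hreal : HasDerivAt F (Rb (1 + (u:ℂ)*z) * z) u := hcomp.comp_ofReal
    have heq : Rb (1 + (u:ℂ)*z) * z = z * z ^ ((1:ℂ)/2) * g u := by
      rw [Rb_seg hz0 hu0.le, hgdef]; ring
    rw [heq] at hreal
    exact hreal.hasDerivWithinAt
  have cbase : Continuous fun u : ℝ => 1 + (u:ℂ)*z := by continuity
  have csqrt : Continuous fun u : ℝ => ((Real.sqrt u : ℝ) : ℂ) :=
    Complex.continuous_ofReal.comp Real.continuous_sqrt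
  have c2 : ContinuousOn (fun u : ℝ => ((2:ℂ) + (u:ℂ)*z) ^ ((1:ℂ)/2)) (Set.Icc 0 1) := by
    apply ContinuousOn.cpow_const
    · fun_prop
    · intro u hu
      exact h2re' u hu.1 hu.2
  have cg : ContinuousOn g (Set.Icc 0 1) := csqrt.continuousOn.mul c2
  have carg : ContinuousOn
      (fun u : ℝ => (1 + (u:ℂ)*z) + (Real.sqrt u : ℂ) * z ^ ((1:ℂ)/2) * ((2:ℂ) + (u:ℂ)*z) ^ ((1:ℂ)/2))
      (Set.Icc 0 1) :=
    cbase.continuousOn.add ((csqrt.continuousOn.mul continuousOn_const).mul c2)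
  have hlogc : ContinuousOn
      (fun u : ℝ => Complex.log ((1 + (u:ℂ)*z) + (Real.sqrt u : ℂ) * z ^ ((1:ℂ)/2) * ((2:ℂ) + (u:ℂ)*z) ^ ((1:ℂ)/2)))
      (Set.Icc 0 1) := by
    intro u hu
    have hmem : (1 + (u:ℂ)*z) + (Real.sqrt u : ℂ) * z ^ ((1:ℂ)/2) * ((2:ℂ) + (u:ℂ)*z) ^ ((1:ℂ)/2)
        ∈ Complex.slitPlane := by
      rw [← Rb_seg hz0 hu.1]
      exact h3' u hu.1 hu.2
    exact ContinuousWithinAt.clog (carg u hu) hmem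
  have hG : ContinuousOn
      (fun u : ℝ => (1/2 : ℂ) * ((1 + (u:ℂ)*z) * ((Real.sqrt u : ℂ) * z ^ ((1:ℂ)/2) * ((2:ℂ) + (u:ℂ)*z) ^ ((1:ℂ)/2))
        - Complex.log ((1 + (u:ℂ)*z) + (Real.sqrt u : ℂ) * z ^ ((1:ℂ)/2) * ((2:ℂ) + (u:ℂ)*z) ^ ((1:ℂ)/2))))
      (Set.Icc 0 1) :=
    continuousOn_const.mul ((cbase.continuousOn.mul
      ((csqrt.continuousOn.mul continuousOn_const).mul c2)).sub hlogc)
  have hFc : ContinuousOn F (Set.Icc 0 1) := by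
    apply hG.congr
    intro u hu
    rw [hFdef]
    show xi (1 + (u:ℂ)*z) = _
    unfold xi
    rw [Rb_seg hz0 hu.1]
  have hInt : IntervalIntegrable (fun u : ℝ => z * z ^ ((1:ℂ)/2) * g u) MeasureTheory.volume 0 1 := by
    apply ContinuousOn.intervalIntegrable
    rw [Set.uIcc_of_le (by norm_num : (0:ℝ) ≤ 1)]
    exact continuousOn_const.mul cg
  have key := intervalIntegral.integral_eq_sub_of_hasDeriv_right_of_le
    (by norm_num : (0:ℝ) ≤ 1) hFc hFd hInt
  have hF1 : F 1 = xi t := by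
    rw [hFdef]
    have : (1:ℂ) + ((1:ℝ):ℂ) * z = t := by rw [hzdef]; push_cast; ring
    simp only [this]
  have hF0 : F 0 = 0 := by
    rw [hFdef]
    push_cast
    rw [zero_mul, add_zero, xi_one]
  rw [hF1, hF0, sub_zero, intervalIntegral.integral_const_mul] at key
  exact key.symm

lemma rpow_three_halves {a : ℝ} (ha : 0 ≤ a) : a ^ ((3:ℝ)/2) = a * Real.sqrt a := by
  rcases eq_or_lt_of_le ha with h | h
  · rw [← h]; simp [Real.zero_rpow (by norm_num : (3:ℝ)/2 ≠ 0)]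
  · rw [Real.sqrt_eq_rpow, ← Real.rpow_one_add' (le_of_lt h) (by norm_num : (1:ℝ) + 1/2 ≠ 0)]
    norm_num

lemma integral_sqrt_01 : ∫ u in (0:ℝ)..1, Real.sqrt u = 2/3 := by
  have : ∀ u : ℝ, Real.sqrt u = u ^ ((1:ℝ)/2) := fun u => Real.sqrt_eq_rpow u
  simp only [this]
  rw [integral_rpow (Or.inl (by norm_num : (-1:ℝ) < 1/2))]
  norm_num

lemma xi_bounds_main {t : ℂ} (hre : 0 ≤ t.re) (him : t.im ≤ 0)
    (hsp : t - 1 ∈ Complex.slitPlane) :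
    2/3 * (‖t-1‖) ^ ((3:ℝ)/2) ≤ ‖xi t‖ ∧
    ‖xi t‖ ≤ 2/3 * Real.sqrt (2 + ‖t-1‖) * (‖t-1‖) ^ ((3:ℝ)/2) := by
  set z := t - 1 with hzdef
  have hz0 : z ≠ 0 := Complex.slitPlane_ne_zero hsp
  set a := ‖z‖ with hadef
  have ha0 : 0 < a := norm_pos_iff.mpr hz0
  have hzre : -1 ≤ z.re := by
    have : z.re = t.re - 1 := by simp [hzdef]
    rw [this]; linarith
  set f : ℝ → ℂ := fun u => (Real.sqrt u : ℂ) * (2 + (u:ℂ)*z) ^ ((1:ℂ)/2) with hfdef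
  have hre2 : ∀ u : ℝ, 0 ≤ u → u ≤ 1 → (1:ℝ) ≤ ((2:ℂ) + (u:ℂ)*z).re := by
    intro u hu hu1
    simp only [Complex.add_re, Complex.mul_re, Complex.ofReal_re, Complex.ofReal_im, zero_mul,
      sub_zero]
    have h1 : u * z.re ≥ u * (-1) := mul_le_mul_of_nonneg_left hzre hu
    have h2 : (2:ℂ).re = 2 := by norm_num
    nlinarith
  have hfc : ContinuousOn f (Set.Icc 0 1) := by
    apply ContinuousOn.mul
    · exact (Complex.continuous_ofReal.comp Real.continuous_sqrt).continuousOn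
    · apply ContinuousOn.cpow_const
      · fun_prop
      · intro u hu
        exact Complex.mem_slitPlane_iff.mpr (Or.inl (by linarith [hre2 u hu.1 hu.2]))
  have hfi : IntervalIntegrable f MeasureTheory.volume 0 1 := by
    apply ContinuousOn.intervalIntegrable
    rwa [Set.uIcc_of_le (by norm_num : (0:ℝ) ≤ 1)]
  set I := ∫ u in (0:ℝ)..1, f u with hIdef
  have hxi : xi t = z * z ^ ((1:ℂ)/2) * I := xi_eq t hre him hsp
  have habs : ‖xi t‖ = a * Real.sqrt a * ‖I‖ := by
    rw [hxi, norm_mul, norm_mul, abs_half]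
  have hI_re : I.re = ∫ u in (0:ℝ)..1, (f u).re := by
    simpa using (ContinuousLinearMap.intervalIntegral_comp_comm Complex.reCLM hfi).symm
  have hre_f : ∀ u ∈ Set.Icc (0:ℝ) 1, Real.sqrt u ≤ (f u).re := by
    intro u hu
    have h1 : (1:ℝ) ≤ (((2:ℂ) + (u:ℂ)*z) ^ ((1:ℂ)/2)).re := one_le_re_half (hre2 u hu.1 hu.2)
    have : (f u).re = Real.sqrt u * (((2:ℂ) + (u:ℂ)*z) ^ ((1:ℂ)/2)).re := by
      rw [hfdef]; exact Complex.re_ofReal_mul _ _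
    rw [this]
    nlinarith [Real.sqrt_nonneg u]
  have hlowI : (2:ℝ)/3 ≤ ‖I‖ := by
    have h1 : (2:ℝ)/3 ≤ I.re := by
      rw [hI_re, ← integral_sqrt_01]
      apply intervalIntegral.integral_mono_on (by norm_num : (0:ℝ) ≤ 1)
      · apply ContinuousOn.intervalIntegrable
        rw [Set.uIcc_of_le (by norm_num : (0:ℝ) ≤ 1)]
        exact Real.continuous_sqrt.continuousOn
      · apply ContinuousOn.intervalIntegrable
        rw [Set.uIcc_of_le (by norm_num : (0:ℝ) ≤ 1)]
        exact Complex.continuous_re.comp_continuousOn hfc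
      · exact hre_f
    calc (2:ℝ)/3 ≤ I.re := h1
      _ ≤ |I.re| := le_abs_self _
      _ ≤ ‖I‖ := Complex.abs_re_le_norm I
  have hupI : ‖I‖ ≤ 2/3 * Real.sqrt (2 + a) := by
    have h1 : ‖I‖ ≤ ∫ u in (0:ℝ)..1, ‖f u‖ := by
      rw [hIdef]
      have := intervalIntegral.norm_integral_le_integral_norm (f := f)
        (μ := MeasureTheory.volume) (a := (0:ℝ)) (b := 1) (by norm_num)
      simpa using this
    have h2 : ∫ u in (0:ℝ)..1, ‖f u‖ ≤ ∫ u in (0:ℝ)..1, Real.sqrt u * Real.sqrt (2 + a) := by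
      apply intervalIntegral.integral_mono_on (by norm_num : (0:ℝ) ≤ 1)
      · apply ContinuousOn.intervalIntegrable
        rw [Set.uIcc_of_le (by norm_num : (0:ℝ) ≤ 1)]
        exact continuous_norm.comp_continuousOn hfc
      · apply ContinuousOn.intervalIntegrable
        rw [Set.uIcc_of_le (by norm_num : (0:ℝ) ≤ 1)]
        exact (Real.continuous_sqrt.mul continuous_const).continuousOn
      · intro u hu
        have e1 : ‖f u‖ = Real.sqrt u * Real.sqrt (‖2 + (u:ℂ)*z‖) := by
          rw [hfdef, norm_mul, abs_half, Complex.norm_real, Real.norm_eq_abs, _root_.abs_of_nonneg (Real.sqrt_nonneg u)]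
        rw [e1]
        apply mul_le_mul_of_nonneg_left _ (Real.sqrt_nonneg u)
        apply Real.sqrt_le_sqrt
        calc ‖2 + (u:ℂ)*z‖ ≤ ‖2‖ + ‖(u:ℂ)*z‖ := norm_add_le _ _
          _ = 2 + u * a := by
              rw [norm_mul, Complex.norm_real, Real.norm_eq_abs, _root_.abs_of_nonneg hu.1]
              norm_num
              exact Or.inl hadef.symm
          _ ≤ 2 + a := by nlinarith [hu.2, ha0.le, hu.1]
    have h3 : ∫ u in (0:ℝ)..1, Real.sqrt u * Real.sqrt (2 + a) = 2/3 * Real.sqrt (2 + a) := by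
      rw [intervalIntegral.integral_mul_const, integral_sqrt_01]
    linarith
  constructor
  · rw [habs, rpow_three_halves ha0.le]
    calc 2/3 * (a * Real.sqrt a) = a * Real.sqrt a * (2/3) := by ring
      _ ≤ a * Real.sqrt a * ‖I‖ := by
          apply mul_le_mul_of_nonneg_left hlowI
          positivity
  · rw [habs, rpow_three_halves ha0.le]
    calc a * Real.sqrt a * ‖I‖ ≤ a * Real.sqrt a * (2/3 * Real.sqrt (2+a)) := by
          apply mul_le_mul_of_nonneg_left hupI
          positivity
      _ = 2/3 * Real.sqrt (2+a) * (a * Real.sqrt a) := by ring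

-- exp((↑c ± ↑π * I) * (1/2)) = ± I * √(exp c) computations
lemma exp_half_aux (c : ℝ) (hc : 0 < c) :
    Complex.exp ((↑(Real.log c) - ↑π * Complex.I) * (1/2)) = -Complex.I * (Real.sqrt c : ℂ) := by
  have e1 : (↑(Real.log c) - ↑π * Complex.I) * (1/2 : ℂ)
      = ↑(Real.log c / 2) + ↑(-(π/2)) * Complex.I := by push_cast; ring
  rw [e1, Complex.exp_add, Complex.exp_mul_I]
  have e2 : Real.log c / 2 = Real.log (Real.sqrt c) := (Real.log_sqrt hc.le).symm
  rw [e2, ← Complex.ofReal_exp, Real.exp_log (Real.sqrt_pos.mpr hc)]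
  rw [← Complex.ofReal_cos, ← Complex.ofReal_sin]
  rw [Real.cos_neg, Real.sin_neg, Real.cos_pi_div_two, Real.sin_pi_div_two]
  push_cast
  ring

lemma exp_half_aux' (c : ℝ) (hc : 0 < c) :
    Complex.exp ((↑(Real.log c) + ↑π * Complex.I) * (1/2)) = Complex.I * (Real.sqrt c : ℂ) := by
  have e1 : (↑(Real.log c) + ↑π * Complex.I) * (1/2 : ℂ)
      = ↑(Real.log c / 2) + ↑(π/2) * Complex.I := by push_cast; ring
  rw [e1, Complex.exp_add, Complex.exp_mul_I]
  have e2 : Real.log c / 2 = Real.log (Real.sqrt c) := (Real.log_sqrt hc.le).symm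
  rw [e2, ← Complex.ofReal_exp, Real.exp_log (Real.sqrt_pos.mpr hc)]
  rw [← Complex.ofReal_cos, ← Complex.ofReal_sin]
  rw [Real.cos_pi_div_two, Real.sin_pi_div_two]
  push_cast
  ring

-- cpow of a negative real at exponent 1/2
lemma cpow_half_neg_real {y : ℝ} (hy : y < 0) :
    ((y:ℂ)) ^ ((1:ℂ)/2) = Complex.I * (Real.sqrt (-y) : ℂ) := by
  have hy0 : (y:ℂ) ≠ 0 := Complex.ofReal_ne_zero.mpr hy.ne
  rw [Complex.cpow_def_of_ne_zero hy0]
  have hlog : Complex.log (y:ℂ) = ↑(Real.log (-y)) + ↑π * Complex.I := by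
    apply Complex.ext
    · simp [Complex.log_re, Complex.norm_real, abs_of_neg hy]
    · simp [Complex.log_im, Complex.arg_ofReal_of_neg hy]
  rw [hlog]
  exact exp_half_aux' (-y) (by linarith)

lemma ofReal_cpow_half {y : ℝ} (hy : 0 ≤ y) :
    ((y:ℂ)) ^ ((1:ℂ)/2) = (Real.sqrt y : ℂ) := by
  have : ((1:ℂ)/2) = (((1:ℝ)/2 : ℝ) : ℂ) := by norm_num
  rw [this, ← Complex.ofReal_cpow hy, Real.sqrt_eq_rpow]

lemma xi_cut_eq {x : ℝ} (hx0 : 0 ≤ x) (hx1 : x < 1) :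
    Rb (x:ℂ) = Complex.I * ((Real.sqrt (1-x) * Real.sqrt (x+1) : ℝ) : ℂ) := by
  unfold Rb
  have e1 : ((x:ℂ) - 1) = (((x - 1 : ℝ)) : ℂ) := by push_cast; ring
  have e2 : ((x:ℂ) + 1) = (((x + 1 : ℝ)) : ℂ) := by push_cast; ring
  rw [e1, e2, cpow_half_neg_real (by linarith : x - 1 < 0), ofReal_cpow_half (by linarith : (0:ℝ) ≤ x + 1)]
  have : -(x - 1) = 1 - x := by ring
  rw [this]
  push_cast
  ring

lemma xi_bounds_cut {x : ℝ} (hx0 : 0 ≤ x) (hx1 : x < 1) :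
    2/3 * (‖(x:ℂ)-1‖) ^ ((3:ℝ)/2) ≤ ‖xi x‖ ∧
    ‖xi x‖ ≤ 2/3 * Real.sqrt (2 + ‖(x:ℂ)-1‖)
      * (‖(x:ℂ)-1‖) ^ ((3:ℝ)/2) := by
  set c : ℝ := Real.sqrt (1-x) * Real.sqrt (x+1) with hcdef
  have hc0 : 0 < c := by
    apply mul_pos (Real.sqrt_pos.mpr (by linarith)) (Real.sqrt_pos.mpr (by linarith))
  set tf : ℝ → ℂ := fun ε => (x:ℂ) - (ε:ℂ)*Complex.I with htf
  have htf_im : ∀ ε : ℝ, (tf ε).im = -ε := by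
    intro ε; simp [htf]
  have htf_re : ∀ ε : ℝ, (tf ε).re = x := by
    intro ε; simp [htf]
  -- limit of (tf ε - 1)^(1/2)
  have hbase : Tendsto (fun ε : ℝ => tf ε - 1) (nhdsWithin 0 (Set.Ioi 0))
      (nhdsWithin ((x:ℂ)-1) {w : ℂ | w.im < 0}) := by
    rw [tendsto_nhdsWithin_iff]
    constructor
    · apply Filter.Tendsto.mono_left _ nhdsWithin_le_nhds
      have hcont : Continuous (fun ε : ℝ => tf ε - 1) := by
        rw [htf]; fun_prop
      have := hcont.tendsto 0
      simpa [htf] using this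
    · filter_upwards [self_mem_nhdsWithin] with ε (hε : 0 < ε)
      simp only [Set.mem_setOf_eq, Complex.sub_im, htf_im, Complex.one_im]
      linarith
  have hlog : Tendsto (fun ε : ℝ => Complex.log (tf ε - 1)) (nhdsWithin 0 (Set.Ioi 0))
      (nhds (↑(Real.log (‖(x:ℂ)-1‖)) - ↑π * Complex.I)) :=
    (Complex.tendsto_log_nhdsWithin_im_neg_of_re_neg_of_im_zero
      (by simp; linarith) (by simp)).comp hbase
  have habs1 : ‖(x:ℂ)-1‖ = 1 - x := by
    have e1 : ((x:ℂ) - 1) = (((x - 1 : ℝ)) : ℂ) := by push_cast; ring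
    rw [e1, Complex.norm_real, Real.norm_eq_abs, abs_of_neg (by linarith : x - 1 < 0)]
    ring
  have hA : Tendsto (fun ε : ℝ => (tf ε - 1) ^ ((1:ℂ)/2)) (nhdsWithin 0 (Set.Ioi 0))
      (nhds (-Complex.I * (Real.sqrt (1-x) : ℂ))) := by
    have h1 : Tendsto (fun ε : ℝ => Complex.exp (Complex.log (tf ε - 1) * (1/2)))
        (nhdsWithin 0 (Set.Ioi 0))
        (nhds (Complex.exp ((↑(Real.log (1-x)) - ↑π * Complex.I) * (1/2)))) := by
      apply (Complex.continuous_exp.tendsto _).comp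
      have := hlog.mul_const ((1:ℂ)/2)
      rw [habs1] at this
      exact this
    rw [exp_half_aux (1-x) (by linarith)] at h1
    apply h1.congr'
    filter_upwards [self_mem_nhdsWithin] with ε (hε : 0 < ε)
    have hne : tf ε - 1 ≠ 0 := by
      intro h
      have : (tf ε - 1).im = 0 := by rw [h]; simp
      rw [Complex.sub_im, htf_im, Complex.one_im] at this
      linarith
    rw [Complex.cpow_def_of_ne_zero hne]
  have hB : Tendsto (fun ε : ℝ => (tf ε + 1) ^ ((1:ℂ)/2)) (nhdsWithin 0 (Set.Ioi 0))
      (nhds ((Real.sqrt (x+1) : ℂ))) := by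
    have hb2 : Tendsto (fun ε : ℝ => tf ε + 1) (nhdsWithin 0 (Set.Ioi 0)) (nhds ((x:ℂ)+1)) := by
      apply Filter.Tendsto.mono_left _ nhdsWithin_le_nhds
      have hcont : Continuous (fun ε : ℝ => tf ε + 1) := by rw [htf]; fun_prop
      have := hcont.tendsto 0
      simpa [htf] using this
    have hmem : ((x:ℂ)+1) ∈ Complex.slitPlane :=
      Complex.mem_slitPlane_iff.mpr (Or.inl (by simp; linarith))
    have := ((continuousAt_cpow_const (b := (1:ℂ)/2) hmem).tendsto).comp hb2
    have heq : ((x:ℂ)+1) ^ ((1:ℂ)/2) = ((Real.sqrt (x+1) : ℝ) : ℂ) := by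
      have e2 : ((x:ℂ) + 1) = (((x + 1 : ℝ)) : ℂ) := by push_cast; ring
      rw [e2, ofReal_cpow_half (by linarith : (0:ℝ) ≤ x + 1)]
    rw [← heq]
    exact this
  have hRb : Tendsto (fun ε : ℝ => Rb (tf ε)) (nhdsWithin 0 (Set.Ioi 0))
      (nhds (-Complex.I * (c : ℂ))) := by
    have := hA.mul hB
    have heq : (-Complex.I * (Real.sqrt (1-x) : ℂ)) * ((Real.sqrt (x+1) : ℂ))
        = -Complex.I * (c : ℂ) := by
      rw [hcdef]; push_cast; ring
    rw [heq] at this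
    exact this
  have htt : Tendsto tf (nhdsWithin 0 (Set.Ioi 0)) (nhds (x:ℂ)) := by
    apply Filter.Tendsto.mono_left _ nhdsWithin_le_nhds
    have hcont : Continuous tf := by rw [htf]; fun_prop
    have := hcont.tendsto 0
    simpa [htf] using this
  have hsum : Tendsto (fun ε : ℝ => tf ε + Rb (tf ε)) (nhdsWithin 0 (Set.Ioi 0))
      (nhds ((x:ℂ) + -Complex.I * (c:ℂ))) := htt.add hRb
  have hw0 : ((x:ℂ) + -Complex.I * (c:ℂ)) ∈ Complex.slitPlane := by
    apply Complex.mem_slitPlane_iff.mpr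
    right
    simp [hc0.ne']
  have hlog2 : Tendsto (fun ε : ℝ => Complex.log (tf ε + Rb (tf ε))) (nhdsWithin 0 (Set.Ioi 0))
      (nhds (Complex.log ((x:ℂ) + -Complex.I * (c:ℂ)))) :=
    ((continuousAt_clog hw0).tendsto).comp hsum
  have hxilim : Tendsto (fun ε : ℝ => xi (tf ε)) (nhdsWithin 0 (Set.Ioi 0))
      (nhds ((1/2 : ℂ) * ((x:ℂ) * (-Complex.I * (c:ℂ))
        - Complex.log ((x:ℂ) + -Complex.I * (c:ℂ))))) := by
    unfold xi
    exact ((htt.mul hRb).sub hlog2).const_mul _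
  -- the limit equals conj (xi x)
  have hconj : (1/2 : ℂ) * ((x:ℂ) * (-Complex.I * (c:ℂ))
      - Complex.log ((x:ℂ) + -Complex.I * (c:ℂ))) = starRingEnd ℂ (xi (x:ℂ)) := by
    have hRbx : Rb (x:ℂ) = Complex.I * (c:ℂ) := xi_cut_eq hx0 hx1
    unfold xi
    rw [hRbx, map_mul, map_sub, map_mul]
    have harg : ((x:ℂ) + Complex.I * (c:ℂ)).arg ≠ π := by
      intro h
      rw [Complex.arg_eq_pi_iff] at h
      have : ((x:ℂ) + Complex.I * (c:ℂ)).im = c := by simp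
      rw [this] at h
      exact hc0.ne' h.2
    have hlc : starRingEnd ℂ (Complex.log ((x:ℂ) + Complex.I * (c:ℂ)))
        = Complex.log ((x:ℂ) + -Complex.I * (c:ℂ)) := by
      rw [← Complex.log_conj _ harg]
      congr 1
      rw [map_add, map_mul, Complex.conj_I, Complex.conj_ofReal, Complex.conj_ofReal]
    rw [hlc]
    simp only [map_div₀, map_one, map_ofNat, map_mul, Complex.conj_ofReal, Complex.conj_I]
    try ring
  rw [hconj] at hxilim
  have habslim : Tendsto (fun ε : ℝ => ‖xi (tf ε)‖) (nhdsWithin 0 (Set.Ioi 0))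
      (nhds (‖xi (x:ℂ)‖)) := by
    have := (continuous_norm.tendsto _).comp hxilim
    rw [Complex.norm_conj] at this; exact this
  have habs_t : Tendsto (fun ε : ℝ => ‖tf ε - 1‖) (nhdsWithin 0 (Set.Ioi 0))
      (nhds (‖(x:ℂ)-1‖)) := by
    apply Filter.Tendsto.mono_left _ nhdsWithin_le_nhds
    have hsub : Continuous (fun ε : ℝ => tf ε - 1) := by rw [htf]; fun_prop
    have hcont : Continuous (fun ε : ℝ => ‖tf ε - 1‖) :=
      continuous_norm.comp hsub
    have := hcont.tendsto 0
    simpa [htf] using this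
  have hrpow : Tendsto (fun ε : ℝ => (‖tf ε - 1‖) ^ ((3:ℝ)/2))
      (nhdsWithin 0 (Set.Ioi 0)) (nhds ((‖(x:ℂ)-1‖) ^ ((3:ℝ)/2))) := by
    have hc : ContinuousAt (fun y : ℝ => y ^ ((3:ℝ)/2)) (‖(x:ℂ)-1‖) :=
      Real.continuousAt_rpow_const _ _ (Or.inr (by norm_num))
    exact (hc.tendsto).comp habs_t
  have hbounds : ∀ ε : ℝ, 0 < ε →
      2/3 * (‖tf ε - 1‖) ^ ((3:ℝ)/2) ≤ ‖xi (tf ε)‖ ∧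
      ‖xi (tf ε)‖ ≤ 2/3 * Real.sqrt (2 + ‖tf ε - 1‖)
        * (‖tf ε - 1‖) ^ ((3:ℝ)/2) := by
    intro ε hε
    apply xi_bounds_main
    · rw [htf_re]; exact hx0
    · rw [htf_im]; linarith
    · apply Complex.mem_slitPlane_iff.mpr
      right
      rw [Complex.sub_im, htf_im, Complex.one_im]
      simpa using hε.ne'
  have hev_low : (fun ε : ℝ => 2/3 * (‖tf ε - 1‖) ^ ((3:ℝ)/2))
      ≤ᶠ[nhdsWithin 0 (Set.Ioi 0)] (fun ε : ℝ => ‖xi (tf ε)‖) := by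
    filter_upwards [self_mem_nhdsWithin] with ε (hε : 0 < ε)
    exact (hbounds ε hε).1
  have hev_up : (fun ε : ℝ => ‖xi (tf ε)‖)
      ≤ᶠ[nhdsWithin 0 (Set.Ioi 0)] (fun ε : ℝ => 2/3 * Real.sqrt (2 + ‖tf ε - 1‖)
        * (‖tf ε - 1‖) ^ ((3:ℝ)/2)) := by
    filter_upwards [self_mem_nhdsWithin] with ε (hε : 0 < ε)
    exact (hbounds ε hε).2
  have hsq : Tendsto (fun ε : ℝ => Real.sqrt (2 + ‖tf ε - 1‖))
      (nhdsWithin 0 (Set.Ioi 0)) (nhds (Real.sqrt (2 + ‖(x:ℂ)-1‖))) :=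
    (Real.continuous_sqrt.tendsto _).comp (tendsto_const_nhds.add habs_t)
  constructor
  · exact le_of_tendsto_of_tendsto (hrpow.const_mul (2/3)) habslim hev_low
  · exact le_of_tendsto_of_tendsto habslim ((hsq.const_mul (2/3)).mul hrpow) hev_up

theorem stmt0 (θ r : ℝ) (hθ : θ ∈ Set.Icc 0 (π/2)) (hr : 0 ≤ r)
    (t : ℂ) (ht : t = (r : ℂ) * Complex.exp (-(θ : ℂ) * Complex.I)) :
    (2/3 : ℝ) * (Real.sin θ) ^ ((3 : ℝ)/2) ≤ ‖xi t‖ ∧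
    (‖t - 1‖ ≤ 1 →
      (2/3 : ℝ) * (‖t - 1‖) ^ ((3 : ℝ)/2) ≤ ‖xi t‖ ∧
      ‖xi t‖ ≤ 2 * (‖t - 1‖) ^ ((3 : ℝ)/2)) := by
  obtain ⟨hθ0, hθ1⟩ := hθ
  have hpi := Real.pi_pos
  have hcos : 0 ≤ Real.cos θ := Real.cos_nonneg_of_mem_Icc ⟨by linarith, hθ1⟩
  have hsin : 0 ≤ Real.sin θ := Real.sin_nonneg_of_nonneg_of_le_pi hθ0 (by linarith)
  have h1 : t = ↑(r * Real.cos θ) - ↑(r * Real.sin θ) * Complex.I := by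
    rw [ht]
    have e : -(θ:ℂ) * Complex.I = ((-θ : ℝ) : ℂ) * Complex.I := by push_cast; ring
    rw [e, Complex.exp_mul_I, ← Complex.ofReal_cos, ← Complex.ofReal_sin,
      Real.cos_neg, Real.sin_neg]
    push_cast
    ring
  have ht_re : t.re = r * Real.cos θ := by rw [h1]; simp [Complex.cos_ofReal_re]
  have ht_im : t.im = -(r * Real.sin θ) := by rw [h1]; simp [Complex.sin_ofReal_re]
  have hre : 0 ≤ t.re := by rw [ht_re]; positivity
  have him : t.im ≤ 0 := by rw [ht_im]; simp; positivity
  have habs_ge : Real.sin θ ≤ ‖t - 1‖ := by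
    rw [Complex.norm_def, ← Real.sqrt_sq hsin]
    apply Real.sqrt_le_sqrt
    rw [Complex.normSq_apply, Complex.sub_re, Complex.sub_im, ht_re, ht_im]
    simp only [Complex.one_re, Complex.one_im, sub_zero]
    nlinarith [Real.sin_sq_add_cos_sq θ, sq_nonneg (r - Real.cos θ)]
  have P : 2/3 * (‖t-1‖) ^ ((3:ℝ)/2) ≤ ‖xi t‖ ∧
      ‖xi t‖ ≤ 2/3 * Real.sqrt (2 + ‖t-1‖)
        * (‖t-1‖) ^ ((3:ℝ)/2) := by
    by_cases hsp : t - 1 ∈ Complex.slitPlane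
    · exact xi_bounds_main hre him hsp
    · rw [Complex.mem_slitPlane_iff] at hsp
      push_neg at hsp
      obtain ⟨hsp1, hsp2⟩ := hsp
      have htim0 : t.im = 0 := by
        have : (t - 1).im = t.im := by simp
        rw [← this, hsp2]
      have htreal : t = ((t.re : ℝ) : ℂ) := by
        apply Complex.ext
        · simp
        · simp [htim0]
      have htre1 : t.re ≤ 1 := by
        have : (t-1).re = t.re - 1 := by simp
        rw [this] at hsp1
        linarith
      rcases eq_or_lt_of_le htre1 with heq | hlt
      · -- t = 1
        have ht1 : t = 1 := by
          rw [htreal, heq]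
          norm_num
        rw [ht1, xi_one]
        have : ‖(1:ℂ) - 1‖ = 0 := by simp
        rw [this, Real.zero_rpow (by norm_num : ((3:ℝ)/2) ≠ 0)]
        simp
      · have := xi_bounds_cut hre hlt
        rw [← htreal] at this
        exact this
  constructor
  · calc (2/3 : ℝ) * (Real.sin θ) ^ ((3:ℝ)/2)
        ≤ 2/3 * (‖t-1‖) ^ ((3:ℝ)/2) := by
          apply mul_le_mul_of_nonneg_left
            (Real.rpow_le_rpow hsin habs_ge (by norm_num)) (by norm_num)
      _ ≤ ‖xi t‖ := P.1
  · intro hle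
    refine ⟨P.1, ?_⟩
    have hs3 : Real.sqrt (2 + ‖t-1‖) ≤ 3 := by
      have h9 : Real.sqrt 9 = 3 := by
        rw [show (9:ℝ) = 3^2 by norm_num, Real.sqrt_sq (by norm_num : (0:ℝ) ≤ 3)]
      calc Real.sqrt (2 + ‖t-1‖) ≤ Real.sqrt 9 :=
            Real.sqrt_le_sqrt (by linarith)
        _ = 3 := h9
    calc ‖xi t‖
        ≤ 2/3 * Real.sqrt (2 + ‖t-1‖) * (‖t-1‖) ^ ((3:ℝ)/2) := P.2
      _ ≤ 2 * (‖t-1‖) ^ ((3:ℝ)/2) := by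
          apply mul_le_mul_of_nonneg_right _ (Real.rpow_nonneg (norm_nonneg _) _)
          linarith
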